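/- Let a ∈ ℂ, a ≠ 0. Let φ, ψ : ℝ → ℂ be bounded differentiable functions and φₜ, ψₜ : ℝ → ℂ measurable functions such that φ′, ψ′, φₜ, ψₜ, sin(φ/2), sin(ψ/2) all lie in L²(ℝ;ℂ), and such that for all x ∈ ℝ: ψ′(x) − φₜ(x) = (1/a)·sin((ψ(x)+φ(x))/2) + a·sin((ψ(x)−φ(x))/2) and ψₜ(x) − φ′(x) = (1/a)·sin((ψ(x)+φ(x))/2) − a·sin((ψ(x)−φ(x))/2). Assume further that the four limits ℓ₊⁺ = lim_{x→+∞}(1 − cos((ψ(x)+φ(x))/2)), ℓ₋⁺ = lim_{x→−∞}(1 − cos((ψ(x)+φ(x))/2)), ℓ₊⁻ = lim_{x→+∞}(1 − cos((ψ(x)−φ(x))/2)), ℓ₋⁻ = lim_{x→−∞}(1 − cos((ψ(x)−φ(x))/2)) exist in ℂ. Then (1/2)∫_ℝ(ψ′² + ψₜ²) dx + ∫_ℝ(1−cos ψ) dx = (1/2)∫_ℝ(φ′² + φₜ²) dx + ∫_ℝ(1−cos φ) dx + (2/a)(ℓ₊⁺ − ℓ₋⁺) + 2a(ℓ₊⁻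 − ℓ₋⁻), and (1/2)∫_ℝ ψ′ψₜ dx = (1/2)∫_ℝ φ′φₜ dx + (1/a)(ℓ₊⁺ − ℓ₋⁺) − a(ℓ₊⁻ − ℓ₋⁻). -/

import Mathlib

open MeasureTheory Filter Complex

lemma norm_cos_le_exp (z : ℂ) : ‖Complex.cos z‖ ≤ Real.exp ‖z‖ := by
  rw [Complex.cos]
  have h1 : ‖Complex.exp (z * Complex.I)‖ ≤ Real.exp ‖z‖ := by
    rw [Complex.norm_exp]
    apply Real.exp_le_exp.mpr
    have : (z * Complex.I).re = -z.im := by simp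
    rw [this]
    calc -z.im ≤ |z.im| := neg_le_abs _
      _ ≤ ‖z‖ := Complex.abs_im_le_norm z
  have h2 : ‖Complex.exp (-z * Complex.I)‖ ≤ Real.exp ‖z‖ := by
    rw [Complex.norm_exp]
    apply Real.exp_le_exp.mpr
    have : (-z * Complex.I).re = z.im := by simp
    rw [this]
    calc z.im ≤ |z.im| := le_abs_self _
      _ ≤ ‖z‖ := Complex.abs_im_le_norm z
  calc ‖(Complex.exp (z * Complex.I) + Complex.exp (-z * Complex.I)) / 2‖
      = ‖Complex.exp (z * Complex.I) + Complex.exp (-z * Complex.I)‖ / 2 := by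
        rw [norm_div]; norm_num
    _ ≤ (Real.exp ‖z‖ + Real.exp ‖z‖) / 2 := by
        gcongr
        exact (norm_add_le _ _).trans (add_le_add h1 h2)
    _ = Real.exp ‖z‖ := by ring

lemma one_sub_cos_eq (z : ℂ) :
    1 - Complex.cos z = 2 * (Complex.sin (z / 2) * Complex.sin (z / 2)) := by
  have h1 : Complex.cos z = Complex.cos (z / 2 + z / 2) := by norm_num
  rw [h1, Complex.cos_add]
  have h2 := Complex.sin_sq_add_cos_sq (z / 2)
  linear_combination -h2

lemma int_mul_L2 {f g : ℝ → ℂ} (hf : MemLp f 2 volume) (hg : MemLp g 2 volume) :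
    Integrable (fun x => f x * g x) volume := by
  have h : (1 : ENNReal) / 1 = 1 / 2 + 1 / 2 := by
    rw [ENNReal.div_add_div_same, one_div_one, show (1:ENNReal)+1 = 2 from one_add_one_eq_two,
      ENNReal.div_self (by norm_num) (by norm_num)]
  have := hg.smul (r := 1) hf
  exact memLp_one_iff_integrable.mp this

lemma memL2_mul_bdd {f g : ℝ → ℂ} (hf : MemLp f 2 volume)
    (hg : AEStronglyMeasurable g volume) (C : ℝ) (hC : ∀ x, ‖g x‖ ≤ C) :
    MemLp (fun x => f x * g x) 2 volume := by
  have h1 : MemLp g ⊤ volume := memLp_top_of_bound hg C (ae_of_all _ hC)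
  exact h1.smul (r := 2) hf

lemma memL2_sin_add (f g : ℝ → ℂ) (hfc : Continuous f) (hgc : Continuous g)
    (Cf Cg : ℝ) (hfb : ∀ x, ‖f x‖ ≤ Cf) (hgb : ∀ x, ‖g x‖ ≤ Cg)
    (hfs : MemLp (fun x => Complex.sin (f x / 2)) 2 volume)
    (hgs : MemLp (fun x => Complex.sin (g x / 2)) 2 volume) :
    MemLp (fun x => Complex.sin ((f x + g x) / 2)) 2 volume := by
  have key : (fun x => Complex.sin ((f x + g x) / 2))
      = fun x => Complex.sin (f x / 2) * Complex.cos (g x / 2)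
        + Complex.sin (g x / 2) * Complex.cos (f x / 2) := by
    funext x
    rw [show (f x + g x) / 2 = f x / 2 + g x / 2 by ring, Complex.sin_add]
    ring
  rw [key]
  have hcosb : ∀ (h : ℝ → ℂ) (Ch : ℝ), (∀ x, ‖h x‖ ≤ Ch) →
      ∀ x, ‖Complex.cos (h x / 2)‖ ≤ Real.exp Ch := by
    intro h Ch hCh x
    calc ‖Complex.cos (h x / 2)‖ ≤ Real.exp ‖h x / 2‖ := norm_cos_le_exp _
      _ ≤ Real.exp Ch := by
          apply Real.exp_le_exp.mpr
          rw [norm_div]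
          have h2 : ‖(2 : ℂ)‖ = 2 := by norm_num
          rw [h2]
          have := hCh x
          have hn : (0:ℝ) ≤ ‖h x‖ := norm_nonneg _
          linarith
  refine MemLp.add ?_ ?_
  · exact memL2_mul_bdd hfs
      ((Complex.continuous_cos.comp (hgc.div_const 2)).aestronglyMeasurable)
      (Real.exp Cg) (hcosb g Cg hgb)
  · exact memL2_mul_bdd hgs
      ((Complex.continuous_cos.comp (hfc.div_const 2)).aestronglyMeasurable)
      (Real.exp Cf) (hcosb f Cf hfb)

lemma hasDerivAt_one_sub_cos {u : ℝ → ℂ} {u' : ℂ} {x : ℝ} (hu : HasDerivAt u u' x) :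
    HasDerivAt (fun y => 1 - Complex.cos (u y)) (Complex.sin (u x) * u') x := by
  have h1 : HasDerivAt (fun y => Complex.cos (u y)) (u' • (-Complex.sin (u x))) x :=
    (Complex.hasDerivAt_cos (u x)).scomp x hu
  have h2 := h1.const_sub 1
  convert h2 using 1
  case e'_9 => simp [smul_eq_mul]; ring
  case e'_4 => rfl


set_option maxHeartbeats 1000000 in
/-- **Bäcklund transformation and conserved quantities (Lemma 2.4).**
If `(ψ, ψₜ)` is a Bäcklund transform of `(φ, φₜ)` with parameter `a ≠ 0`, with both
profiles bounded and the natural `L²` integrability assumptions, and if the four limits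
`ℓ₊⁺, ℓ₋⁺, ℓ₊⁻, ℓ₋⁻` of `1 − cos((ψ±φ)/2)` at `±∞` exist, then the sine-Gordon
energy and momentum of `(ψ, ψₜ)` and `(φ, φₜ)` are related by explicit boundary terms. -/
theorem backlund_energy_momentum (a : ℂ) (ha : a ≠ 0)
    (φ ψ φt ψt : ℝ → ℂ)
    (hφbdd : ∃ C : ℝ, ∀ x : ℝ, ‖φ x‖ ≤ C) (hψbdd : ∃ C : ℝ, ∀ x : ℝ, ‖ψ x‖ ≤ C)
    (hφdiff : Differentiable ℝ φ) (hψdiff : Differentiable ℝ ψ)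
    (hφtmeas : Measurable φt) (hψtmeas : Measurable ψt)
    (hφ'L2 : MemLp (deriv φ) 2 volume) (hψ'L2 : MemLp (deriv ψ) 2 volume)
    (hφtL2 : MemLp φt 2 volume) (hψtL2 : MemLp ψt 2 volume)
    (hφsinL2 : MemLp (fun x => Complex.sin (φ x / 2)) 2 volume)
    (hψsinL2 : MemLp (fun x => Complex.sin (ψ x / 2)) 2 volume)
    (hBT1 : ∀ x : ℝ,
      deriv ψ x - φt x
        = (1 / a) * Complex.sin ((ψ x + φ x) / 2)
          + a * Complex.sin ((ψ x - φ x) / 2))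
    (hBT2 : ∀ x : ℝ,
      ψt x - deriv φ x
        = (1 / a) * Complex.sin ((ψ x + φ x) / 2)
          - a * Complex.sin ((ψ x - φ x) / 2))
    (ℓpp ℓmp ℓpm ℓmm : ℂ)
    (hℓpp : Tendsto (fun x => 1 - Complex.cos ((ψ x + φ x) / 2)) atTop (nhds ℓpp))
    (hℓmp : Tendsto (fun x => 1 - Complex.cos ((ψ x + φ x) / 2)) atBot (nhds ℓmp))
    (hℓpm : Tendsto (fun x => 1 - Complex.cos ((ψ x - φ x) / 2)) atTop (nhds ℓpm))
    (hℓmm : Tendsto (fun x => 1 - Complex.cos ((ψ x - φ x) / 2)) atBot (nhds ℓmm)) :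
    ((1 / 2 : ℂ) * ∫ x : ℝ, ((deriv ψ x) ^ 2 + (ψt x) ^ 2))
        + (∫ x : ℝ, (1 - Complex.cos (ψ x)))
      = ((1 / 2 : ℂ) * ∫ x : ℝ, ((deriv φ x) ^ 2 + (φt x) ^ 2))
          + (∫ x : ℝ, (1 - Complex.cos (φ x)))
          + (2 / a) * (ℓpp - ℓmp) + 2 * a * (ℓpm - ℓmm) ∧
    (1 / 2 : ℂ) * ∫ x : ℝ, deriv ψ x * ψt x
      = ((1 / 2 : ℂ) * ∫ x : ℝ, deriv φ x * φt x)
          + (1 / a) * (ℓpp - ℓmp) - a * (ℓpm - ℓmm) := by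
  obtain ⟨Cφ, hCφ⟩ := hφbdd
  obtain ⟨Cψ, hCψ⟩ := hψbdd
  have hψ'at : ∀ x : ℝ, HasDerivAt ψ (deriv ψ x) x := fun x => (hψdiff x).hasDerivAt
  have hφ'at : ∀ x : ℝ, HasDerivAt φ (deriv φ x) x := fun x => (hφdiff x).hasDerivAt
  -- L² of sin((ψ±φ)/2)
  have hSp : MemLp (fun x => Complex.sin ((ψ x + φ x) / 2)) 2 volume :=
    memL2_sin_add ψ φ hψdiff.continuous hφdiff.continuous Cψ Cφ hCψ hCφ hψsinL2 hφsinL2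
  have hSm : MemLp (fun x => Complex.sin ((ψ x - φ x) / 2)) 2 volume := by
    have hnegsin : MemLp (fun x => Complex.sin ((-φ x) / 2)) 2 volume := by
      have heq : (fun x : ℝ => Complex.sin ((-φ x) / 2)) = fun x => -Complex.sin (φ x / 2) := by
        funext x; rw [neg_div, Complex.sin_neg]
      rw [heq]; exact hφsinL2.neg
    have h := memL2_sin_add ψ (fun x => -φ x) hψdiff.continuous hφdiff.continuous.neg
      Cψ Cφ hCψ (fun x => by simpa using hCφ x) hψsinL2 hnegsin
    have heq : (fun x : ℝ => Complex.sin ((ψ x - φ x) / 2))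
        = fun x => Complex.sin ((ψ x + -φ x) / 2) := by
      funext x; rw [sub_eq_add_neg]
    rw [heq]; exact h
  -- L² of half sums/differences of derivatives
  have hdp : MemLp (fun x => (deriv ψ x + deriv φ x) / 2) 2 volume := by
    have h := (hψ'L2.add hφ'L2).const_mul ((2 : ℂ)⁻¹)
    have heq : (fun x => (deriv ψ x + deriv φ x) / 2)
        = fun x => (2 : ℂ)⁻¹ * (deriv ψ + deriv φ) x := by
      funext x; simp only [Pi.add_apply]; ring
    rw [heq]; exact h
  have hdm : MemLp (fun x => (deriv ψ x - deriv φ x) / 2) 2 volume := by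
    have h := (hψ'L2.sub hφ'L2).const_mul ((2 : ℂ)⁻¹)
    have heq : (fun x => (deriv ψ x - deriv φ x) / 2)
        = fun x => (2 : ℂ)⁻¹ * (deriv ψ - deriv φ) x := by
      funext x; simp only [Pi.sub_apply]; ring
    rw [heq]; exact h
  -- the boundary densities
  have ihp : Integrable
      (fun x => Complex.sin ((ψ x + φ x) / 2) * ((deriv ψ x + deriv φ x) / 2)) volume :=
    int_mul_L2 hSp hdp
  have ihm : Integrable
      (fun x => Complex.sin ((ψ x - φ x) / 2) * ((deriv ψ x - deriv φ x) / 2)) volume :=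
    int_mul_L2 hSm hdm
  have hIp : (∫ x : ℝ, Complex.sin ((ψ x + φ x) / 2) * ((deriv ψ x + deriv φ x) / 2))
      = ℓpp - ℓmp := by
    have hderiv : ∀ x : ℝ, HasDerivAt (fun y => 1 - Complex.cos ((ψ y + φ y) / 2))
        (Complex.sin ((ψ x + φ x) / 2) * ((deriv ψ x + deriv φ x) / 2)) x := fun x =>
      hasDerivAt_one_sub_cos (((hψ'at x).add (hφ'at x)).div_const 2)
    exact integral_of_hasDerivAt_of_tendsto hderiv ihp hℓmp hℓpp
  have hIm : (∫ x : ℝ, Complex.sin ((ψ x - φ x) / 2) * ((deriv ψ x - deriv φ x) / 2))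
      = ℓpm - ℓmm := by
    have hderiv : ∀ x : ℝ, HasDerivAt (fun y => 1 - Complex.cos ((ψ y - φ y) / 2))
        (Complex.sin ((ψ x - φ x) / 2) * ((deriv ψ x - deriv φ x) / 2)) x := fun x =>
      hasDerivAt_one_sub_cos (((hψ'at x).sub (hφ'at x)).div_const 2)
    exact integral_of_hasDerivAt_of_tendsto hderiv ihm hℓmm hℓpm
  -- integrability of all energy/momentum densities
  have iψ'sq : Integrable (fun x => (deriv ψ x) ^ 2) volume := by
    simpa [pow_two] using int_mul_L2 hψ'L2 hψ'L2
  have iφ'sq : Integrable (fun x => (deriv φ x) ^ 2) volume := by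
    simpa [pow_two] using int_mul_L2 hφ'L2 hφ'L2
  have iψtsq : Integrable (fun x => (ψt x) ^ 2) volume := by
    simpa [pow_two] using int_mul_L2 hψtL2 hψtL2
  have iφtsq : Integrable (fun x => (φt x) ^ 2) volume := by
    simpa [pow_two] using int_mul_L2 hφtL2 hφtL2
  have iψcos : Integrable (fun x => 1 - Complex.cos (ψ x)) volume := by
    have heq : (fun x : ℝ => 1 - Complex.cos (ψ x))
        = fun x => 2 * (Complex.sin (ψ x / 2) * Complex.sin (ψ x / 2)) :=
      funext fun x => one_sub_cos_eq (ψ x)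
    rw [heq]; exact (int_mul_L2 hψsinL2 hψsinL2).const_mul 2
  have iφcos : Integrable (fun x => 1 - Complex.cos (φ x)) volume := by
    have heq : (fun x : ℝ => 1 - Complex.cos (φ x))
        = fun x => 2 * (Complex.sin (φ x / 2) * Complex.sin (φ x / 2)) :=
      funext fun x => one_sub_cos_eq (φ x)
    rw [heq]; exact (int_mul_L2 hφsinL2 hφsinL2).const_mul 2
  have iMψ : Integrable (fun x => deriv ψ x * ψt x) volume := int_mul_L2 hψ'L2 hψtL2
  have iMφ : Integrable (fun x => deriv φ x * φt x) volume := int_mul_L2 hφ'L2 hφtL2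
  -- pointwise identities
  have key1 : ∀ x : ℝ,
      (1 / 2 : ℂ) * ((deriv ψ x) ^ 2 + (ψt x) ^ 2) + (1 - Complex.cos (ψ x))
      = ((1 / 2 : ℂ) * ((deriv φ x) ^ 2 + (φt x) ^ 2) + (1 - Complex.cos (φ x)))
        + ((2 / a) * (Complex.sin ((ψ x + φ x) / 2) * ((deriv ψ x + deriv φ x) / 2))
          + (2 * a) * (Complex.sin ((ψ x - φ x) / 2) * ((deriv ψ x - deriv φ x) / 2))) := by
    intro x
    have e1 := hBT1 x
    have e2 := hBT2 x
    have htrig : Complex.cos (ψ x) = Complex.cos (φ x)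
        - 2 * (Complex.sin ((ψ x + φ x) / 2) * Complex.sin ((ψ x - φ x) / 2)) := by
      have h := Complex.cos_sub_cos (φ x) (ψ x)
      rw [show (φ x - ψ x) / 2 = -((ψ x - φ x) / 2) by ring,
          show (φ x + ψ x) / 2 = (ψ x + φ x) / 2 by ring, Complex.sin_neg] at h
      linear_combination -h
    have hd : deriv ψ x = φt x + ((1 / a) * Complex.sin ((ψ x + φ x) / 2)
        + a * Complex.sin ((ψ x - φ x) / 2)) := by linear_combination e1
    have ht : ψt x = deriv φ x + ((1 / a) * Complex.sin ((ψ x + φ x) / 2)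
        - a * Complex.sin ((ψ x - φ x) / 2)) := by linear_combination e2
    rw [hd, ht, htrig]
    linear_combination (-2 * Complex.sin ((ψ x + φ x) / 2) * Complex.sin ((ψ x - φ x) / 2))
      * (mul_inv_cancel₀ ha)
  have key2 : ∀ x : ℝ,
      (1 / 2 : ℂ) * (deriv ψ x * ψt x)
      = (1 / 2 : ℂ) * (deriv φ x * φt x)
        + ((1 / a) * (Complex.sin ((ψ x + φ x) / 2) * ((deriv ψ x + deriv φ x) / 2))
          + (-a) * (Complex.sin ((ψ x - φ x) / 2) * ((deriv ψ x - deriv φ x) / 2))) := by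
    intro x
    have e1 := hBT1 x
    have e2 := hBT2 x
    have hd : deriv ψ x = φt x + ((1 / a) * Complex.sin ((ψ x + φ x) / 2)
        + a * Complex.sin ((ψ x - φ x) / 2)) := by linear_combination e1
    have ht : ψt x = deriv φ x + ((1 / a) * Complex.sin ((ψ x + φ x) / 2)
        - a * Complex.sin ((ψ x - φ x) / 2)) := by linear_combination e2
    rw [hd, ht]
    ring
  constructor
  · -- energy
    have lhsψ : (∫ x : ℝ, ((1 / 2 : ℂ) * ((deriv ψ x) ^ 2 + (ψt x) ^ 2)
          + (1 - Complex.cos (ψ x))))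
        = (1 / 2 : ℂ) * (∫ x : ℝ, ((deriv ψ x) ^ 2 + (ψt x) ^ 2))
          + ∫ x : ℝ, (1 - Complex.cos (ψ x)) := by
      have h1 : Integrable (fun x => (1 / 2 : ℂ) * ((deriv ψ x) ^ 2 + (ψt x) ^ 2)) volume := by
        exact (iψ'sq.add iψtsq).const_mul _
      rw [integral_add h1 iψcos, show (fun x => (1 / 2 : ℂ) * ((deriv ψ x) ^ 2 + (ψt x) ^ 2))
        = fun x => (1 / 2 : ℂ) * ((fun x => (deriv ψ x) ^ 2 + (ψt x) ^ 2) x) from rfl,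
        integral_const_mul]
    have lhsφ : (∫ x : ℝ, ((1 / 2 : ℂ) * ((deriv φ x) ^ 2 + (φt x) ^ 2)
          + (1 - Complex.cos (φ x))))
        = (1 / 2 : ℂ) * (∫ x : ℝ, ((deriv φ x) ^ 2 + (φt x) ^ 2))
          + ∫ x : ℝ, (1 - Complex.cos (φ x)) := by
      have h1 : Integrable (fun x => (1 / 2 : ℂ) * ((deriv φ x) ^ 2 + (φt x) ^ 2)) volume := by
        exact (iφ'sq.add iφtsq).const_mul _
      rw [integral_add h1 iφcos, show (fun x => (1 / 2 : ℂ) * ((deriv φ x) ^ 2 + (φt x) ^ 2))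
        = fun x => (1 / 2 : ℂ) * ((fun x => (deriv φ x) ^ 2 + (φt x) ^ 2) x) from rfl,
        integral_const_mul]
    have combo : (∫ x : ℝ,
          ((2 / a) * (Complex.sin ((ψ x + φ x) / 2) * ((deriv ψ x + deriv φ x) / 2))
          + (2 * a) * (Complex.sin ((ψ x - φ x) / 2) * ((deriv ψ x - deriv φ x) / 2))))
        = (2 / a) * (ℓpp - ℓmp) + (2 * a) * (ℓpm - ℓmm) := by
      rw [integral_add (ihp.const_mul _) (ihm.const_mul _), integral_const_mul,
        integral_const_mul, hIp, hIm]
    calc (1 / 2 : ℂ) * (∫ x : ℝ, ((deriv ψ x) ^ 2 + (ψt x) ^ 2))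
          + ∫ x : ℝ, (1 - Complex.cos (ψ x))
        = ∫ x : ℝ, ((1 / 2 : ℂ) * ((deriv ψ x) ^ 2 + (ψt x) ^ 2)
            + (1 - Complex.cos (ψ x))) := lhsψ.symm
      _ = ∫ x : ℝ, (((1 / 2 : ℂ) * ((deriv φ x) ^ 2 + (φt x) ^ 2) + (1 - Complex.cos (φ x)))
            + ((2 / a) * (Complex.sin ((ψ x + φ x) / 2) * ((deriv ψ x + deriv φ x) / 2))
              + (2 * a) * (Complex.sin ((ψ x - φ x) / 2) * ((deriv ψ x - deriv φ x) / 2)))) :=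
          integral_congr_ae (ae_of_all _ key1)
      _ = (∫ x : ℝ, ((1 / 2 : ℂ) * ((deriv φ x) ^ 2 + (φt x) ^ 2) + (1 - Complex.cos (φ x))))
            + ∫ x : ℝ,
              ((2 / a) * (Complex.sin ((ψ x + φ x) / 2) * ((deriv ψ x + deriv φ x) / 2))
              + (2 * a) * (Complex.sin ((ψ x - φ x) / 2) * ((deriv ψ x - deriv φ x) / 2))) :=
          integral_add (((iφ'sq.add iφtsq).const_mul _).add iφcos)
            ((ihp.const_mul _).add (ihm.const_mul _))
      _ = ((1 / 2 : ℂ) * (∫ x : ℝ, ((deriv φ x) ^ 2 + (φt x) ^ 2))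
            + ∫ x : ℝ, (1 - Complex.cos (φ x)))
            + ((2 / a) * (ℓpp - ℓmp) + (2 * a) * (ℓpm - ℓmm)) := by rw [lhsφ, combo]
      _ = ((1 / 2 : ℂ) * ∫ x : ℝ, ((deriv φ x) ^ 2 + (φt x) ^ 2))
            + (∫ x : ℝ, (1 - Complex.cos (φ x)))
            + (2 / a) * (ℓpp - ℓmp) + 2 * a * (ℓpm - ℓmm) := by ring
  · -- momentum
    have combo : (∫ x : ℝ,
          ((1 / a) * (Complex.sin ((ψ x + φ x) / 2) * ((deriv ψ x + deriv φ x) / 2))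
          + (-a) * (Complex.sin ((ψ x - φ x) / 2) * ((deriv ψ x - deriv φ x) / 2))))
        = (1 / a) * (ℓpp - ℓmp) + (-a) * (ℓpm - ℓmm) := by
      rw [integral_add (ihp.const_mul _) (ihm.const_mul _), integral_const_mul,
        integral_const_mul, hIp, hIm]
    calc (1 / 2 : ℂ) * ∫ x : ℝ, deriv ψ x * ψt x
        = ∫ x : ℝ, (1 / 2 : ℂ) * (deriv ψ x * ψt x) := (integral_const_mul _ _).symm
      _ = ∫ x : ℝ, ((1 / 2 : ℂ) * (deriv φ x * φt x)
            + ((1 / a) * (Complex.sin ((ψ x + φ x) / 2) * ((deriv ψ x + deriv φ x) / 2))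
              + (-a) * (Complex.sin ((ψ x - φ x) / 2) * ((deriv ψ x - deriv φ x) / 2)))) :=
          integral_congr_ae (ae_of_all _ key2)
      _ = (∫ x : ℝ, (1 / 2 : ℂ) * (deriv φ x * φt x))
            + ∫ x : ℝ,
              ((1 / a) * (Complex.sin ((ψ x + φ x) / 2) * ((deriv ψ x + deriv φ x) / 2))
              + (-a) * (Complex.sin ((ψ x - φ x) / 2) * ((deriv ψ x - deriv φ x) / 2))) :=
          integral_add (iMφ.const_mul _) ((ihp.const_mul _).add (ihm.const_mul _))
      _ = ((1 / 2 : ℂ) * ∫ x : ℝ, deriv φ x * φt x)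
            + ((1 / a) * (ℓpp - ℓmp) + (-a) * (ℓpm - ℓmm)) := by
          rw [integral_const_mul, combo]
      _ = ((1 / 2 : ℂ) * ∫ x : ℝ, deriv φ x * φt x)
            + (1 / a) * (ℓpp - ℓmp) - a * (ℓpm - ℓmm) := by ring
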